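/- Let R be a TRS and A a strongly linear interpretation (f_A(x₁,…,xₙ) = x₁+⋯+xₙ+c_f over ℕ), and suppose every rule l → r of R is non-duplicating (no variable occurs more often in r than in l). Set Δ := max over rules l → r of ([r]₁ ∸ [l]₁) evaluated under the zero assignment, where ∸ is truncated subtraction. Then for all terms s, t with s →_R t (at any position, under any substitution), [t] ≤ [s] + Δ, where [u] denotes the evaluation of u under the zero assignment. -/

import Mathlib

/-- First-order terms over a signature `F` with ℕ-indexed variables. -/
inductive Term (F : Type) : Type
  | var : ℕ → Term F
  | fn : F → List (Term F) → Term F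

/-- Evaluation under the strongly linear interpretation
`f_A(x₁,…,xₙ) = x₁ + ⋯ + xₙ + c_f` over ℕ, with assignment `α`. -/
def evalSL {F : Type} (c : F → ℕ) (α : ℕ → ℕ) : Term F → ℕ
  | .var v => α v
  | .fn f ts => (ts.attach.map fun u => evalSL c α u.1).sum + c f
  decreasing_by
    have := List.sizeOf_lt_of_mem u.2
    simp only [Term.fn.sizeOf_spec] at *
    omega

/-- The list of variable occurrences of a term (with multiplicity). -/
def varList {F : Type} : Term F → List ℕ
  | .var v => [v]
  | .fn _ ts => (ts.attach.map fun u => varList u.1).flatten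
  decreasing_by
    have := List.sizeOf_lt_of_mem u.2
    simp only [Term.fn.sizeOf_spec] at *
    omega

/-- The list of function symbol occurrences of a term (with multiplicity). -/
def fnList {F : Type} : Term F → List F
  | .var _ => []
  | .fn f ts => f :: (ts.attach.map fun u => fnList u.1).flatten
  decreasing_by
    have := List.sizeOf_lt_of_mem u.2
    simp only [Term.fn.sizeOf_spec] at *
    omega

/-- The size of a term: the number of symbols in it. -/
def tsize {F : Type} : Term F → ℕ
  | .var _ => 1
  | .fn _ ts => 1 + (ts.attach.map fun u => tsize u.1).sum
  decreasing_by
    have := List.sizeOf_lt_of_mem u.2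
    simp only [Term.fn.sizeOf_spec] at *
    omega

/-- Application of a substitution to a term. -/
def subst {F : Type} (σ : ℕ → Term F) : Term F → Term F
  | .var v => σ v
  | .fn f ts => .fn f (ts.attach.map fun u => subst σ u.1)
  decreasing_by
    have := List.sizeOf_lt_of_mem u.2
    simp only [Term.fn.sizeOf_spec] at *
    omega

/-- A rewrite step (at some position, under some substitution). -/
inductive RewriteAt {F : Type} (R : Term F → Term F → Prop) :
    Term F → List ℕ → Term F → Prop
  | root (l r : Term F) (σ : ℕ → Term F) :
      R l r → RewriteAt R (subst σ l) [] (subst σ r)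
  | congr (f : F) (ts : List (Term F)) (i : ℕ) (u v : Term F) (p : List ℕ) :
      ts[i]? = some u → RewriteAt R u p v →
      RewriteAt R (Term.fn f ts) (i :: p) (Term.fn f (ts.set i v))

/-- Number of occurrences of the variable `x` in `t`. -/
def countVar {F : Type} (x : ℕ) (t : Term F) : ℕ := (varList t).count x

theorem evalSL_fn {F : Type} (c : F → ℕ) (α : ℕ → ℕ) (f : F) (ts : List (Term F)) :
    evalSL c α (.fn f ts) = (ts.map (evalSL c α)).sum + c f := by
  rw [evalSL]; simp

theorem varList_fn {F : Type} (f : F) (ts : List (Term F)) :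
    varList (Term.fn f ts) = (ts.map varList).flatten := by
  rw [varList]; simp

theorem evalSL_subst {F : Type} (c : F → ℕ) (α : ℕ → ℕ) (σ : ℕ → Term F) :
    ∀ t, evalSL c α (subst σ t) = evalSL c (fun v => evalSL c α (σ v)) t
  | .var v => by simp [subst, evalSL]
  | .fn f ts => by
    rw [subst]
    simp only [evalSL_fn, List.map_map]
    congr 1
    have : ∀ u ∈ ts.attach,
        ((evalSL c α ∘ fun u : {x // x ∈ ts} => subst σ u.1) u)
          = (evalSL c (fun v => evalSL c α (σ v)) ∘ Subtype.val) u := by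
      intro u _
      exact evalSL_subst c α σ u.1
    rw [List.map_congr_left this, ← List.map_map]
    simp
  decreasing_by
    have := List.sizeOf_lt_of_mem u.2
    simp only [Term.fn.sizeOf_spec] at *
    omega

theorem evalSL_decomp {F : Type} (c : F → ℕ) (α : ℕ → ℕ) :
    ∀ t : Term F, evalSL c α t = ((varList t).map α).sum + evalSL c (fun _ => 0) t
  | .var v => by simp [varList, evalSL]
  | .fn f ts => by
    rw [evalSL_fn, evalSL_fn, varList_fn]
    have : ∀ u ∈ ts, evalSL c α u = ((varList u).map α).sum + evalSL c (fun _ => 0) u :=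
      fun u _ => evalSL_decomp c α u
    have h : (ts.map (evalSL c α)).sum
        = (ts.map (fun u => ((varList u).map α).sum)).sum
          + (ts.map (evalSL c (fun _ => 0))).sum := by
      induction ts with
      | nil => simp
      | cons a l ih =>
        simp only [List.map_cons, List.sum_cons]
        rw [this a (by simp), ih (fun u hu => this u (by simp [hu]))]
        omega
    rw [h]
    have : (((ts.map varList).flatten).map α).sum
        = (ts.map (fun u => ((varList u).map α).sum)).sum := by
      rw [List.map_flatten, List.sum_flatten, List.map_map, List.map_map]
      simp only [Function.comp_def]
    rw [this]; omega
  decreasing_by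
    have := List.sizeOf_lt_of_mem ‹u ∈ ts›
    simp only [Term.fn.sizeOf_spec] at *
    omega

theorem sum_le_of_count_le (g : ℕ → ℕ) (A B : List ℕ)
    (h : ∀ x, A.count x ≤ B.count x) : (A.map g).sum ≤ (B.map g).sum := by
  have hle : (A : Multiset ℕ) ≤ (B : Multiset ℕ) := by
    rw [Multiset.le_iff_count]; intro a; simpa using h a
  obtain ⟨u, hu⟩ := Multiset.le_iff_exists_add.mp hle
  have : ((B : Multiset ℕ).map g).sum = ((A : Multiset ℕ).map g).sum + (u.map g).sum := by
    rw [hu, Multiset.map_add, Multiset.sum_add]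
  have hA : ((A : Multiset ℕ).map g).sum = (A.map g).sum := by simp
  have hB : ((B : Multiset ℕ).map g).sum = (B.map g).sum := by simp
  omega

theorem le_foldr_max (a : ℕ) (L : List ℕ) (h : a ∈ L) : a ≤ L.foldr max 0 := by
  induction L with
  | nil => simp at h
  | cons b l ih =>
    rcases List.mem_cons.mp h with h | h
    · simp [h, le_max_iff]
    · simp only [List.foldr_cons, le_max_iff]; exact Or.inr (ih h)

theorem sum_set {F : Type} (g : Term F → ℕ) :
    ∀ (ts : List (Term F)) (i : ℕ) (u v : Term F), ts[i]? = some u →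
      ((ts.set i v).map g).sum + g u = (ts.map g).sum + g v := by
  intro ts
  induction ts with
  | nil => intro i u v h; simp at h
  | cons a l ih =>
    intro i u v h
    cases i with
    | zero =>
      simp only [List.getElem?_cons_zero] at h
      injection h with h; subst h
      simp [List.set]; omega
    | succ n =>
      simp only [List.getElem?_cons_succ] at h
      have := ih n u v h
      simp only [List.set_cons_succ, List.map_cons, List.sum_cons]
      omega

/-- for a non-duplicating TRS `R` compatible with a strongly linear
interpretation, with `Δ = max_{l → r ∈ R} ([r] ∸ [l])` (zero assignment,
truncated subtraction), every rewrite step `s →_R t` satisfies `[t] ≤ [s] + Δ`. -/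
theorem stmt15 {F : Type} (c : F → ℕ) (R : List (Term F × Term F))
    (hnd : ∀ p ∈ R, ∀ x : ℕ, countVar x p.2 ≤ countVar x p.1)
    (Δ : ℕ)
    (hΔ : Δ = (R.map fun p =>
      evalSL c (fun _ => 0) p.2 - evalSL c (fun _ => 0) p.1).foldr max 0) :
    ∀ s t : Term F, (∃ q, RewriteAt (fun l r => (l, r) ∈ R) s q t) →
      evalSL c (fun _ => 0) t ≤ evalSL c (fun _ => 0) s + Δ := by
  rintro s t ⟨q, h⟩
  induction h with
  | root l r σ hR =>
    have hl := evalSL_subst c (fun _ => 0) σ l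
    have hr := evalSL_subst c (fun _ => 0) σ r
    set g : ℕ → ℕ := fun v => evalSL c (fun _ => 0) (σ v) with hg
    have dl := evalSL_decomp c g l
    have dr := evalSL_decomp c g r
    have hsum : ((varList r).map g).sum ≤ ((varList l).map g).sum := by
      apply sum_le_of_count_le
      intro x
      exact hnd (l, r) hR x
    have hΔ' : evalSL c (fun _ => 0) r - evalSL c (fun _ => 0) l ≤ Δ := by
      rw [hΔ]
      exact le_foldr_max _ _ (List.mem_map.mpr ⟨(l, r), hR, rfl⟩)
    omega
  | congr f ts i u v p hget _ ih =>
    have h1 := sum_set (evalSL c (fun _ => 0)) ts i u v hget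
    rw [evalSL_fn, evalSL_fn]
    omega
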